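/- Let (χ, μ) be a probability space, n a positive integer, C ≥ 1 and D > 0 constants, and let 𝒥 be a finite collection of pairwise disjoint measurable subsets of χ, each satisfying μ(I) ≥ (1/C)·n^{−D/(D+2)} (so that |𝒥| ≤ C·n^{D/(D+2)}). Let X₁, …, Xₙ be i.i.d. samples from μ and let μ_X = (1/n)·Σᵢ δ_{Xᵢ} be the empirical measure. Then for every τ > 0, with probability at least 1 − 2·C·n·exp(−τ²/(2 + τ·√C)), every I ∈ 𝒥 satisfies |μ_X(I)/μ(I) − 1| ≤ √C · n^{−1/(D+2)} · τ. -/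

import Mathlib

open MeasureTheory Real
open scoped Nat ENNReal

set_option maxHeartbeats 1000000

lemma fact_ge (n : ℕ) : 2 * 3 ^ n ≤ (n + 2)! := by
  induction n with
  | zero => simp [Nat.factorial]
  | succ k ih =>
    have h : (k + 1 + 2)! = (k + 3) * (k + 2)! := Nat.factorial_succ (k + 2)
    rw [h]
    have := Nat.factorial_pos (k + 2)
    calc 2 * 3 ^ (k + 1) = 3 * (2 * 3 ^ k) := by ring
    _ ≤ 3 * (k + 2)! := by exact Nat.mul_le_mul_left 3 ih
    _ ≤ (k + 3) * (k + 2)! := Nat.mul_le_mul_right _ (by omega)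

lemma exp_quad {x : ℝ} (h3 : |x| < 3) :
    Real.exp x - 1 - x ≤ x ^ 2 / (2 * (1 - |x| / 3)) := by
  have hs : Summable (fun n : ℕ => x ^ n / n !) := Real.summable_pow_div_factorial x
  have hs2 : Summable (fun n : ℕ => x ^ (n + 2) / (n + 2)!) := (summable_nat_add_iff 2).2 hs
  have hsa : Summable (fun n : ℕ => |x| ^ (n + 2) / (n + 2)!) :=
    (summable_nat_add_iff 2).2 (Real.summable_pow_div_factorial |x|)
  have hr : (0:ℝ) ≤ |x| / 3 := by positivity
  have hr1 : |x| / 3 < 1 := by linarith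
  have hgeo : Summable (fun n : ℕ => x ^ 2 / 2 * (|x| / 3) ^ n) :=
    (summable_geometric_of_lt_one hr hr1).mul_left _
  have key : Real.exp x - 1 - x = ∑' n : ℕ, x ^ (n + 2) / (n + 2)! := by
    have hshift := Summable.sum_add_tsum_nat_add (f := fun n : ℕ => x ^ n / n !) 2 hs
    have hexp : Real.exp x = ∑' n : ℕ, x ^ n / n ! := by
      rw [Real.exp_eq_exp_ℝ, NormedSpace.exp_eq_tsum_div]
    have hsum2 : (∑ i ∈ Finset.range 2, x ^ i / i !) = 1 + x := by
      simp [Finset.sum_range_succ, Nat.factorial]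
    rw [hexp, ← hshift, hsum2]; ring
  rw [key]
  have h1 : ∀ n : ℕ, x ^ (n + 2) / (n + 2)! ≤ x ^ 2 / 2 * (|x| / 3) ^ n := by
    intro n
    have hf : ((n + 2)! : ℝ) ≥ 2 * 3 ^ n := by exact_mod_cast fact_ge n
    have hfp : (0:ℝ) < (n + 2)! := by exact_mod_cast Nat.factorial_pos (n + 2)
    have hx2 : x ^ (n + 2) ≤ x ^ 2 * |x| ^ n := by
      calc x ^ (n + 2) ≤ |x ^ (n + 2)| := le_abs_self _
      _ = |x| ^ 2 * |x| ^ n := by rw [abs_pow]; ring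
      _ = x ^ 2 * |x| ^ n := by rw [sq_abs]
    calc x ^ (n + 2) / (n + 2)! ≤ (x ^ 2 * |x| ^ n) / (2 * 3 ^ n) := by
          apply div_le_div₀ (by positivity) hx2 (by positivity) hf
    _ = x ^ 2 / 2 * (|x| / 3) ^ n := by rw [div_pow]; ring
  have h2 : (∑' n : ℕ, x ^ (n + 2) / (n + 2)!) ≤ ∑' n : ℕ, x ^ 2 / 2 * (|x| / 3) ^ n :=
    Summable.tsum_le_tsum h1 hs2 hgeo
  have h3' : (∑' n : ℕ, x ^ 2 / 2 * (|x| / 3) ^ n) = x ^ 2 / 2 * (1 - |x| / 3)⁻¹ := by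
    rw [tsum_mul_left, tsum_geometric_of_lt_one hr hr1]
  rw [h3'] at h2
  refine h2.trans (le_of_eq ?_)
  field_simp

lemma chernoff_ind {χ : Type*} [MeasurableSpace χ] (μ : Measure χ) [IsProbabilityMeasure μ]
    (n : ℕ) (I : Set χ) (hI : MeasurableSet I) (l t : ℝ) :
    Measure.pi (fun _ : Fin n => μ)
        {x : Fin n → χ | t ≤ ∑ i, l * Set.indicator I (fun _ => (1:ℝ)) (x i)} ≤
      ENNReal.ofReal (Real.exp (-t) * (1 + (μ I).toReal * (Real.exp l - 1)) ^ n) := by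
  letI : MeasureSpace χ := ⟨μ⟩
  haveI : IsProbabilityMeasure (volume : Measure χ) := ‹_›
  have hvol : Measure.pi (fun _ : Fin n => μ) = (volume : Measure (Fin n → χ)) :=
    (MeasureTheory.volume_pi).symm
  rw [hvol]
  set g : χ → ℝ := fun y => Real.exp (l * Set.indicator I (fun _ => (1:ℝ)) y) with hg
  have hgeq : ∀ y, g y = 1 + (Real.exp l - 1) * Set.indicator I (fun _ => (1:ℝ)) y := by
    intro y
    by_cases h : y ∈ I <;> simp [hg, Set.indicator_of_mem, Set.indicator_of_notMem, h]
  have hmg : Measurable g := by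
    apply Real.measurable_exp.comp
    exact measurable_const.mul (measurable_const.indicator hI)
  have hgint : Integrable g volume := by
    have : Integrable (fun y => 1 + (Real.exp l - 1) * Set.indicator I (fun _ => (1:ℝ)) y)
        (volume : Measure χ) :=
      (integrable_const 1).add (((integrable_const (1:ℝ)).indicator hI).const_mul _)
    exact this.congr (Filter.Eventually.of_forall fun y => (hgeq y).symm)
  have hgval : ∫ y, g y = 1 + (μ I).toReal * (Real.exp l - 1) := by
    simp_rw [hgeq]
    rw [integral_add (integrable_const 1)
      (((integrable_const (1:ℝ)).indicator hI).const_mul _),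
      MeasureTheory.integral_const_mul, integral_indicator_const _ hI]
    simp [mul_comm]
    left; rfl
  set f : (Fin n → χ) → ℝ := fun x => ∏ i, g (x i) with hf
  have hmf : Measurable f := Finset.measurable_prod _ fun i _ => hmg.comp (measurable_pi_apply i)
  have hgpos : ∀ y, 0 < g y := fun y => Real.exp_pos _
  have hgbd : ∀ y, g y ≤ max 1 (Real.exp l) := by
    intro y
    by_cases h : y ∈ I
    · simp only [hg, Set.indicator_of_mem h, mul_one]; exact le_max_right _ _
    · simp [hg, Set.indicator_of_notMem h]
  have hfint : Integrable f volume := by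
    apply Integrable.mono' (integrable_const ((max 1 (Real.exp l)) ^ n))
      hmf.aestronglyMeasurable
    apply Filter.Eventually.of_forall
    intro x
    rw [Real.norm_eq_abs, abs_of_pos (Finset.prod_pos fun i _ => hgpos _)]
    calc (∏ i, g (x i)) ≤ ∏ _i : Fin n, max 1 (Real.exp l) :=
          Finset.prod_le_prod (fun i _ => (hgpos _).le) (fun i _ => hgbd _)
    _ = (max 1 (Real.exp l)) ^ n := by simp
  have hfval : ∫ x, f x = (1 + (μ I).toReal * (Real.exp l - 1)) ^ n := by
    rw [hf]
    rw [MeasureTheory.integral_fintype_prod_volume_eq_pow (ι := Fin n) g, hgval]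
    simp
  have hmarkov := mul_meas_ge_le_integral_of_nonneg
    (Filter.Eventually.of_forall fun x => (Finset.prod_pos fun i _ => hgpos (x i)).le)
    hfint (Real.exp t)
  have hsub : {x : Fin n → χ | t ≤ ∑ i, l * Set.indicator I (fun _ => (1:ℝ)) (x i)} ⊆
      {x | Real.exp t ≤ f x} := by
    intro x hx
    have : f x = Real.exp (∑ i, l * Set.indicator I (fun _ => (1:ℝ)) (x i)) := by
      rw [hf, Real.exp_sum]
    rw [Set.mem_setOf_eq, this]
    exact Real.exp_le_exp.2 hx
  have hnet : (volume {x : Fin n → χ | t ≤ ∑ i, l * Set.indicator I (fun _ => (1:ℝ)) (x i)}).toReal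
      ≤ Real.exp (-t) * (1 + (μ I).toReal * (Real.exp l - 1)) ^ n := by
    have h1 : (volume {x : Fin n → χ | t ≤ ∑ i, l * Set.indicator I (fun _ => (1:ℝ)) (x i)}).toReal
        ≤ (volume {x | Real.exp t ≤ f x}).toReal := by
      apply ENNReal.toReal_mono (measure_ne_top _ _) (measure_mono hsub)
    have h2 : Real.exp t * (volume {x | Real.exp t ≤ f x}).toReal ≤
        (1 + (μ I).toReal * (Real.exp l - 1)) ^ n := hfval ▸ hmarkov
    have h3 := mul_le_mul_of_nonneg_left h2 (Real.exp_pos (-t)).le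
    rw [← mul_assoc, ← Real.exp_add, neg_add_cancel, Real.exp_zero, one_mul] at h3
    exact h1.trans h3
  calc volume {x : Fin n → χ | t ≤ ∑ i, l * Set.indicator I (fun _ => (1:ℝ)) (x i)} =
      ENNReal.ofReal ((volume {x : Fin n → χ | t ≤ ∑ i, l * Set.indicator I (fun _ => (1:ℝ)) (x i)}).toReal) := by
        rw [ENNReal.ofReal_toReal (measure_ne_top _ _)]
  _ ≤ _ := ENNReal.ofReal_le_ofReal hnet

lemma tail_bound {χ : Type*} [MeasurableSpace χ] (μ : Measure χ) [IsProbabilityMeasure μ]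
    {n : ℕ} (hn : 0 < n) {I : Set χ} (hI : MeasurableSet I) {a : ℝ} (ha : 0 < a)
    (hp : 0 < (μ I).toReal) :
    Measure.pi (fun _ : Fin n => μ)
      {x : Fin n → χ |
        ¬ |((∑ i, Set.indicator I (fun _ => (1:ℝ)) (x i)) / n) / (μ I).toReal - 1| ≤ a} ≤
    ENNReal.ofReal (2 * Real.exp (-(n * (μ I).toReal * a ^ 2) / (2 + 2 * a / 3))) := by
  set p := (μ I).toReal with hpdef
  have hp1 : p ≤ 1 := by
    rw [hpdef]
    exact ENNReal.toReal_le_of_le_ofReal zero_le_one (by simpa using prob_le_one (μ := μ) (s := I))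
  set lam := 3 * a / (3 + a) with hlamdef
  have h3a : (0:ℝ) < 3 + a := by linarith
  have hlam0 : 0 < lam := by positivity
  have hlam3 : lam < 3 := by
    rw [hlamdef, div_lt_iff₀ h3a]; linarith
  have hml : 1 - lam / 3 = 3 / (3 + a) := by
    rw [hlamdef]; field_simp; ring
  have hquadp : Real.exp lam - 1 - lam ≤ lam ^ 2 / (2 * (1 - lam / 3)) := by
    have := exp_quad (x := lam) (by rwa [abs_of_pos hlam0])
    rwa [abs_of_pos hlam0] at this
  have hquadn : Real.exp (-lam) - 1 + lam ≤ lam ^ 2 / (2 * (1 - lam / 3)) := by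
    have := exp_quad (x := -lam) (by rwa [abs_neg, abs_of_pos hlam0])
    rw [abs_neg, abs_of_pos hlam0] at this
    convert this using 1 <;> ring_nf
  have halg : lam ^ 2 / (2 * (1 - lam / 3)) - lam * a = -(a ^ 2) / (2 + 2 * a / 3) := by
    rw [hml, hlamdef]
    field_simp
    ring
  have hexp_bd : ∀ l : ℝ, Real.exp l - 1 - l * a ≤ lam ^ 2 / (2 * (1 - lam / 3)) - lam * a →
      True := fun _ _ => trivial
  -- common final exponent bound
  have hfinal : ∀ y : ℝ, y ≤ lam ^ 2 / (2 * (1 - lam / 3)) - lam * a →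
      (n : ℝ) * p * y ≤ -(n * p * a ^ 2) / (2 + 2 * a / 3) := by
    intro y hy
    have hnp : (0:ℝ) ≤ (n : ℝ) * p := by positivity
    have := mul_le_mul_of_nonneg_left (hy.trans_eq halg) hnp
    calc (n:ℝ) * p * y ≤ (n:ℝ) * p * (-(a ^ 2) / (2 + 2 * a / 3)) := this
    _ = -(n * p * a ^ 2) / (2 + 2 * a / 3) := by ring
  set S : (Fin n → χ) → ℝ := fun x => ∑ i, Set.indicator I (fun _ => (1:ℝ)) (x i) with hS
  have hUP : Measure.pi (fun _ : Fin n => μ) {x | (n:ℝ) * p * (1 + a) ≤ S x} ≤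
      ENNReal.ofReal (Real.exp (-(n * p * a ^ 2) / (2 + 2 * a / 3))) := by
    refine le_trans (measure_mono ?_) ((chernoff_ind μ n I hI lam (lam * ((n:ℝ) * p * (1 + a)))).trans
      (ENNReal.ofReal_le_ofReal ?_))
    · intro x hx
      simp only [Set.mem_setOf_eq] at hx ⊢
      rw [← Finset.mul_sum]
      exact mul_le_mul_of_nonneg_left hx hlam0.le
    · have hbase : 0 ≤ 1 + p * (Real.exp lam - 1) := by
        nlinarith [Real.add_one_le_exp lam]
      calc Real.exp (-(lam * ((n:ℝ) * p * (1 + a)))) * (1 + p * (Real.exp lam - 1)) ^ n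
          ≤ Real.exp (-(lam * ((n:ℝ) * p * (1 + a)))) * (Real.exp (p * (Real.exp lam - 1))) ^ n := by
            apply mul_le_mul_of_nonneg_left _ (Real.exp_pos _).le
            apply pow_le_pow_left₀ hbase
            linarith [Real.add_one_le_exp (p * (Real.exp lam - 1))]
      _ = Real.exp ((n:ℝ) * (p * (Real.exp lam - 1)) - lam * ((n:ℝ) * p * (1 + a))) := by
            rw [← Real.exp_nat_mul, ← Real.exp_add]; ring_nf
      _ ≤ Real.exp (-(n * p * a ^ 2) / (2 + 2 * a / 3)) := by
            apply Real.exp_le_exp.2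
            have : (n:ℝ) * (p * (Real.exp lam - 1)) - lam * ((n:ℝ) * p * (1 + a)) =
                (n:ℝ) * p * ((Real.exp lam - 1 - lam) - lam * a) := by ring
            rw [this]
            exact hfinal _ (by linarith)
  have hLO : Measure.pi (fun _ : Fin n => μ) {x | S x ≤ (n:ℝ) * p * (1 - a)} ≤
      ENNReal.ofReal (Real.exp (-(n * p * a ^ 2) / (2 + 2 * a / 3))) := by
    refine le_trans (measure_mono ?_) ((chernoff_ind μ n I hI (-lam) (-lam * ((n:ℝ) * p * (1 - a)))).trans
      (ENNReal.ofReal_le_ofReal ?_))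
    · intro x hx
      simp only [Set.mem_setOf_eq] at hx ⊢
      rw [← Finset.mul_sum]
      nlinarith [hx, hlam0]
    · have he1 : Real.exp (-lam) ≤ 1 := Real.exp_le_one_iff.2 (by linarith)
      have hbase : 0 ≤ 1 + p * (Real.exp (-lam) - 1) := by nlinarith [Real.exp_pos (-lam)]
      calc Real.exp (-(-lam * ((n:ℝ) * p * (1 - a)))) * (1 + p * (Real.exp (-lam) - 1)) ^ n
          ≤ Real.exp (-(-lam * ((n:ℝ) * p * (1 - a)))) * (Real.exp (p * (Real.exp (-lam) - 1))) ^ n := by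
            apply mul_le_mul_of_nonneg_left _ (Real.exp_pos _).le
            apply pow_le_pow_left₀ hbase
            linarith [Real.add_one_le_exp (p * (Real.exp (-lam) - 1))]
      _ = Real.exp ((n:ℝ) * (p * (Real.exp (-lam) - 1)) + lam * ((n:ℝ) * p * (1 - a))) := by
            rw [← Real.exp_nat_mul, ← Real.exp_add]; ring_nf
      _ ≤ Real.exp (-(n * p * a ^ 2) / (2 + 2 * a / 3)) := by
            apply Real.exp_le_exp.2
            have : (n:ℝ) * (p * (Real.exp (-lam) - 1)) + lam * ((n:ℝ) * p * (1 - a)) =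
                (n:ℝ) * p * ((Real.exp (-lam) - 1 + lam) - lam * a) := by ring
            rw [this]
            exact hfinal _ (by linarith)
  have hsub : {x : Fin n → χ | ¬ |(S x / n) / p - 1| ≤ a} ⊆
      {x | (n:ℝ) * p * (1 + a) ≤ S x} ∪ {x | S x ≤ (n:ℝ) * p * (1 - a)} := by
    intro x hx
    simp only [Set.mem_setOf_eq, not_le] at hx
    have hnp : (0:ℝ) < (n:ℝ) * p := by positivity
    rw [div_div] at hx
    rcases lt_abs.mp hx with h | h
    · left
      have h2 : (1:ℝ) + a < S x / ((n:ℝ) * p) := by linarith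
      have h3 := (lt_div_iff₀ hnp).mp h2
      simp only [Set.mem_setOf_eq]
      nlinarith
    · right
      have h2 : S x / ((n:ℝ) * p) < 1 - a := by linarith
      have h3 := (div_lt_iff₀ hnp).mp h2
      simp only [Set.mem_setOf_eq]
      nlinarith
  refine (measure_mono hsub).trans ((measure_union_le _ _).trans ?_)
  refine (add_le_add hUP hLO).trans ?_
  rw [← ENNReal.ofReal_add (Real.exp_pos _).le (Real.exp_pos _).le]
  exact ENNReal.ofReal_le_ofReal (by linarith)

theorem stmt1
    {χ : Type*} [MeasurableSpace χ] (μ : Measure χ) [IsProbabilityMeasure μ]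
    (n : ℕ) (hn : 0 < n) (C D : ℝ) (hC : 1 ≤ C) (hD : 0 < D)
    (𝒥 : Finset (Set χ))
    (hmeas : ∀ I ∈ 𝒥, MeasurableSet I)
    (hdisj : (𝒥 : Set (Set χ)).PairwiseDisjoint id)
    (hlb : ∀ I ∈ 𝒥, ENNReal.ofReal ((1 / C) * (n : ℝ) ^ (-(D / (D + 2)))) ≤ μ I)
    (τ : ℝ) (hτ : 0 < τ) :
    ENNReal.ofReal (1 - 2 * C * n * Real.exp (-(τ ^ 2) / (2 + τ * Real.sqrt C))) ≤
      Measure.pi (fun _ : Fin n => μ)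
        {X : Fin n → χ | ∀ I ∈ 𝒥,
          |((∑ i, Set.indicator I (fun _ => (1 : ℝ)) (X i)) / n) / (μ I).toReal - 1| ≤
            Real.sqrt C * (n : ℝ) ^ (-(1 / (D + 2))) * τ} := by
  have hC0 : (0:ℝ) < C := by linarith
  have hN : (0:ℝ) < (n:ℝ) := by exact_mod_cast hn
  have hN1 : (1:ℝ) ≤ (n:ℝ) := by exact_mod_cast hn
  have hD2 : (0:ℝ) < D + 2 := by linarith
  set N : ℝ := (n:ℝ) with hNdef
  set a : ℝ := Real.sqrt C * N ^ (-(1 / (D + 2))) * τ with hadef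
  have hsC : 0 < Real.sqrt C := Real.sqrt_pos.2 hC0
  have hsC2 : Real.sqrt C ^ 2 = C := Real.sq_sqrt hC0.le
  have hpow_pos : 0 < N ^ (-(1 / (D + 2))) := Real.rpow_pos_of_pos hN _
  have ha : 0 < a := by positivity
  have hpow_le1 : N ^ (-(1 / (D + 2))) ≤ 1 :=
    Real.rpow_le_one_of_one_le_of_nonpos hN1 (neg_nonpos.2 (by positivity))
  set r : ℝ := (1 / C) * N ^ (-(D / (D + 2))) with hrdef
  have hr : 0 < r := by positivity
  -- lower bound on p_I
  have hpI : ∀ I ∈ 𝒥, r ≤ (μ I).toReal := by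
    intro I hIJ
    exact (ENNReal.ofReal_le_iff_le_toReal (measure_ne_top μ I)).1 (hlb I hIJ)
  -- exponent comparison
  have hnpa : ∀ I ∈ 𝒥, τ ^ 2 ≤ (n:ℝ) * (μ I).toReal * a ^ 2 := by
    intro I hIJ
    have e1 : N ^ (-(D / (D + 2))) * (N ^ (-(1 / (D + 2)))) ^ 2 = N⁻¹ := by
      rw [← Real.rpow_natCast (N ^ (-(1 / (D + 2)))) 2, ← Real.rpow_mul hN.le,
        ← Real.rpow_add hN, ← Real.rpow_neg_one N]
      congr 1
      push_cast
      field_simp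
      ring
    have h1 : N * r * a ^ 2 = τ ^ 2 := by
      rw [hrdef, hadef]
      have expand : N * (1 / C * N ^ (-(D / (D + 2)))) * (Real.sqrt C * N ^ (-(1 / (D + 2))) * τ) ^ 2 =
          (N * (N ^ (-(D / (D + 2))) * (N ^ (-(1 / (D + 2)))) ^ 2)) * (Real.sqrt C ^ 2 / C) * τ ^ 2 := by
        ring
      rw [expand, hsC2, div_self hC0.ne', e1, mul_inv_cancel₀ hN.ne', one_mul, one_mul]
    calc τ ^ 2 = N * r * a ^ 2 := h1.symm
    _ ≤ (n:ℝ) * (μ I).toReal * a ^ 2 := by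
        have := hpI I hIJ
        have h2 : (0:ℝ) ≤ a ^ 2 := sq_nonneg a
        nlinarith
  have ha_le : a ≤ τ * Real.sqrt C := by
    rw [hadef]
    calc Real.sqrt C * N ^ (-(1 / (D + 2))) * τ ≤ Real.sqrt C * 1 * τ := by
          apply mul_le_mul_of_nonneg_right _ hτ.le
          exact mul_le_mul_of_nonneg_left hpow_le1 hsC.le
    _ = τ * Real.sqrt C := by ring
  have hexp_cmp : ∀ I ∈ 𝒥, Real.exp (-((n:ℝ) * (μ I).toReal * a ^ 2) / (2 + 2 * a / 3)) ≤
      Real.exp (-(τ ^ 2) / (2 + τ * Real.sqrt C)) := by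
    intro I hIJ
    apply Real.exp_le_exp.2
    have hd1 : (0:ℝ) < 2 + 2 * a / 3 := by linarith
    have hd2 : 2 + 2 * a / 3 ≤ 2 + τ * Real.sqrt C := by linarith [ha_le]
    rw [neg_div, neg_div, neg_le_neg_iff]
    exact div_le_div₀ (by positivity) (hnpa I hIJ) hd1 hd2
  -- cardinality bound
  have hcard : (𝒥.card : ℝ) * r ≤ 1 := by
    have hsum : ∑ I ∈ 𝒥, μ I = μ (⋃ I ∈ 𝒥, I) := (measure_biUnion_finset hdisj hmeas).symm
    have hle1 : ∑ I ∈ 𝒥, μ I ≤ 1 := by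
      rw [hsum]; simpa using prob_le_one
    have hlow : (𝒥.card : ℝ≥0∞) * ENNReal.ofReal r ≤ ∑ I ∈ 𝒥, μ I := by
      calc (𝒥.card : ℝ≥0∞) * ENNReal.ofReal r = ∑ _I ∈ 𝒥, ENNReal.ofReal r := by
            rw [Finset.sum_const, nsmul_eq_mul]
      _ ≤ ∑ I ∈ 𝒥, μ I := Finset.sum_le_sum fun I hIJ => hlb I hIJ
    have := hlow.trans hle1
    rw [show ((𝒥.card : ℝ≥0∞)) = ENNReal.ofReal (𝒥.card : ℝ) by simp,
      ← ENNReal.ofReal_mul (by positivity)] at this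
    exact (ENNReal.ofReal_le_one).1 this
  have hcard2 : (𝒥.card : ℝ) ≤ C * N := by
    have h1r : 1 / r = C * N ^ (D / (D + 2)) := by
      rw [hrdef, Real.rpow_neg hN.le]
      field_simp
    have : (𝒥.card : ℝ) ≤ 1 / r := by
      rw [le_div_iff₀ hr]; exact hcard
    refine this.trans ?_
    rw [h1r]
    have : N ^ (D / (D + 2)) ≤ N ^ (1:ℝ) :=
      Real.rpow_le_rpow_of_exponent_le hN1 (by rw [div_le_one hD2]; linarith)
    rw [Real.rpow_one] at this
    nlinarith
  -- union bound
  set ν := Measure.pi (fun _ : Fin n => μ) with hν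
  haveI : IsProbabilityMeasure ν := by rw [hν]; infer_instance
  set G : Set (Fin n → χ) := {X : Fin n → χ | ∀ I ∈ 𝒥,
      |((∑ i, Set.indicator I (fun _ => (1 : ℝ)) (X i)) / n) / (μ I).toReal - 1| ≤ a} with hG
  have hGc : Gᶜ ⊆ ⋃ I ∈ 𝒥, {x : Fin n → χ |
      ¬ |((∑ i, Set.indicator I (fun _ => (1:ℝ)) (x i)) / n) / (μ I).toReal - 1| ≤ a} := by
    intro x hx
    simp only [hG, Set.mem_compl_iff, Set.mem_setOf_eq, not_forall] at hx
    obtain ⟨I, hIJ, hI⟩ := hx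
    exact Set.mem_biUnion hIJ hI
  have hbad : ν Gᶜ ≤ ENNReal.ofReal (2 * C * N * Real.exp (-(τ ^ 2) / (2 + τ * Real.sqrt C))) := by
    refine (measure_mono hGc).trans ((measure_biUnion_finset_le 𝒥 _).trans ?_)
    have hterm : ∀ I ∈ 𝒥, ν {x : Fin n → χ |
        ¬ |((∑ i, Set.indicator I (fun _ => (1:ℝ)) (x i)) / n) / (μ I).toReal - 1| ≤ a} ≤
        ENNReal.ofReal (2 * Real.exp (-(τ ^ 2) / (2 + τ * Real.sqrt C))) := by
      intro I hIJ
      have hp : 0 < (μ I).toReal := hr.trans_le (hpI I hIJ)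
      refine (tail_bound μ hn (hmeas I hIJ) ha hp).trans (ENNReal.ofReal_le_ofReal ?_)
      have := hexp_cmp I hIJ
      push_cast
      linarith
    calc ∑ I ∈ 𝒥, ν {x : Fin n → χ |
        ¬ |((∑ i, Set.indicator I (fun _ => (1:ℝ)) (x i)) / n) / (μ I).toReal - 1| ≤ a}
        ≤ ∑ _I ∈ 𝒥, ENNReal.ofReal (2 * Real.exp (-(τ ^ 2) / (2 + τ * Real.sqrt C))) :=
          Finset.sum_le_sum hterm
    _ = (𝒥.card : ℝ≥0∞) * ENNReal.ofReal (2 * Real.exp (-(τ ^ 2) / (2 + τ * Real.sqrt C))) := by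
          rw [Finset.sum_const, nsmul_eq_mul]
    _ ≤ ENNReal.ofReal (2 * C * N * Real.exp (-(τ ^ 2) / (2 + τ * Real.sqrt C))) := by
          rw [show ((𝒥.card : ℝ≥0∞)) = ENNReal.ofReal (𝒥.card : ℝ) by simp,
            ← ENNReal.ofReal_mul (by positivity)]
          apply ENNReal.ofReal_le_ofReal
          have he : 0 < Real.exp (-(τ ^ 2) / (2 + τ * Real.sqrt C)) := Real.exp_pos _
          nlinarith
  have hsplit : (1:ℝ≥0∞) ≤ ν G + ν Gᶜ := by
    calc (1:ℝ≥0∞) = ν Set.univ := (measure_univ (μ := ν)).symm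
    _ = ν (G ∪ Gᶜ) := by rw [Set.union_compl_self]
    _ ≤ ν G + ν Gᶜ := measure_union_le _ _
  calc ENNReal.ofReal (1 - 2 * C * n * Real.exp (-(τ ^ 2) / (2 + τ * Real.sqrt C)))
      = 1 - ENNReal.ofReal (2 * C * N * Real.exp (-(τ ^ 2) / (2 + τ * Real.sqrt C))) := by
        rw [ENNReal.ofReal_sub _ (by positivity), ENNReal.ofReal_one]
  _ ≤ 1 - ν Gᶜ := tsub_le_tsub_left hbad 1
  _ ≤ ν G := tsub_le_iff_right.2 hsplit
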